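/- Let Y = {(a,b,m) : a,b ∈ ℚ, a < b, m ∈ ℤ/4ℤ} with relations: R((a,b,m),(c,d,n)) iff (a,b) = (c,d) and n = m+1; E((a,b,m),(c,d,n)) iff (a,b)_m = (c,d)_n and |{a,b} ∩ {c,d}| = 1, where (a,b)_m denotes a if m ∈ {0,2} and b if m ∈ {1,3}; and N((a,b,m),(c,d,n)) iff {a,b} ∩ {c,d} = ∅. Then the structure 𝔜 = (Y;R,E,N) is a model-complete core: for every map e : Y → Y preserving R, E, N and every finite subset F of Y, there exists a bijection γ : Y → Y such that both γ and γ⁻¹ preserve R, E, N and e agrees with γ on F. -/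

import Mathlib

/-- Triples `(a, b, m)` with `a, b ∈ ℚ` and `m ∈ ℤ/4ℤ`. -/
abbrev Trip : Type := ℚ × ℚ × ZMod 4

/-- `(a,b)_m`: equal to `a` if `m ∈ {0,2}` and to `b` if `m ∈ {1,3}`. -/
def selCoord (p : Trip) : ℚ := if p.2.2 = 0 ∨ p.2.2 = 2 then p.1 else p.2.1

/-- The unordered pair `{a, b}` associated with a triple `(a, b, m)`. -/
def pairOf (p : Trip) : Finset ℚ := {p.1, p.2.1}

/-- `R((a,b,m),(c,d,n))` iff `(a,b) = (c,d)` and `n = m + 1`. -/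
def Rrel (u v : Trip) : Prop := u.1 = v.1 ∧ u.2.1 = v.2.1 ∧ v.2.2 = u.2.2 + 1

/-- `E((a,b,m),(c,d,n))` iff `(a,b)_m = (c,d)_n` and `|{a,b} ∩ {c,d}| = 1`. -/
def Erel (u v : Trip) : Prop := selCoord u = selCoord v ∧ (pairOf u ∩ pairOf v).card = 1

/-- `N((a,b,m),(c,d,n))` iff `{a,b} ∩ {c,d} = ∅`. -/
def Nrel (u v : Trip) : Prop := pairOf u ∩ pairOf v = ∅

/-- The domain `Y` of triples `(a, b, m)` with `a < b`. -/
abbrev Ydom : Type := {p : Trip // p.1 < p.2.1}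

/-- A map `Y → Y` preserving the relations `R`, `E`, `N`. -/
def IsHomY (e : Ydom → Ydom) : Prop :=
  (∀ u v : Ydom, Rrel u.1 v.1 → Rrel (e u).1 (e v).1) ∧
  (∀ u v : Ydom, Erel u.1 v.1 → Erel (e u).1 (e v).1) ∧
  (∀ u v : Ydom, Nrel u.1 v.1 → Nrel (e u).1 (e v).1)

-- basic aux
lemma sel_mem (p : Trip) : selCoord p ∈ pairOf p := by
  unfold selCoord pairOf; split <;> simp

lemma pairOf_card_le (p : Trip) : (pairOf p).card ≤ 2 := by
  unfold pairOf
  exact (Finset.card_insert_le _ _).trans (by simp)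

lemma selCoord_fst {a b : ℚ} {m : ZMod 4} (hm : m = 0 ∨ m = 2) :
    selCoord (a, b, m) = a := if_pos hm

lemma selCoord_snd {a b : ℚ} {m : ZMod 4} (hm : ¬(m = 0 ∨ m = 2)) :
    selCoord (a, b, m) = b := if_neg hm

lemma pair_sorted {c d p q : ℚ} (h : ({c, d} : Finset ℚ) = {p, q}) (hcd : c < d)
    (hpq : p < q) : c = p ∧ d = q := by
  have hp : p ∈ ({c, d} : Finset ℚ) := by rw [h]; simp
  have hq : q ∈ ({c, d} : Finset ℚ) := by rw [h]; simp
  simp only [Finset.mem_insert, Finset.mem_singleton] at hp hq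
  rcases hp with rfl | rfl
  · rcases hq with rfl | rfl
    · exact absurd hpq (lt_irrefl _)
    · exact ⟨rfl, rfl⟩
  · rcases hq with rfl | rfl
    · exact absurd (hcd.trans hpq) (lt_irrefl _)
    · exact absurd hpq (lt_irrefl _)

-- zmod facts
lemma zmod_cases (m : ZMod 4) : m = 0 ∨ m = 1 ∨ m = 2 ∨ m = 3 := by revert m; decide
lemma zmod_par1 : ∀ t m : ZMod 4, (t = 0 ∨ t = 2) →
    ((m = 0 ∨ m = 2) ↔ (t + m = 0 ∨ t + m = 2)) := by decide
lemma zmod_par2 : ∀ t m : ZMod 4, ¬(t = 0 ∨ t = 2) →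
    ((m = 0 ∨ m = 2) ↔ ¬(t + m = 0 ∨ t + m = 2)) := by decide
lemma zmod_neg : ∀ t : ZMod 4, (-t = 0 ∨ -t = 2) ↔ (t = 0 ∨ t = 2) := by decide

-- the candidate automorphism machinery
def phi0 (g : ℚ → ℚ) (t : ℚ → ℚ → ZMod 4) (p : Trip) : Trip :=
  if g p.1 < g p.2.1 then (g p.1, g p.2.1, t p.1 p.2.1 + p.2.2)
  else (g p.2.1, g p.1, t p.1 p.2.1 + p.2.2)

lemma phi0_lt (g : ℚ → ℚ) (hg : Function.Injective g) (t : ℚ → ℚ → ZMod 4)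
    (p : Trip) (hp : p.1 < p.2.1) : (phi0 g t p).1 < (phi0 g t p).2.1 := by
  unfold phi0
  split
  · assumption
  · exact lt_of_le_of_ne (not_lt.mp (by assumption)) (hg.ne hp.ne')

def Phi (g : ℚ → ℚ) (hg : Function.Injective g) (t : ℚ → ℚ → ZMod 4) (u : Ydom) : Ydom :=
  ⟨phi0 g t u.1, phi0_lt g hg t u.1 u.2⟩

lemma pairOf_phi0 (g : ℚ → ℚ) (t : ℚ → ℚ → ZMod 4) (p : Trip) :
    pairOf (phi0 g t p) = (pairOf p).image g := by
  obtain ⟨a, b, m⟩ := p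
  unfold phi0 pairOf
  split
  · simp
  · simp [Finset.pair_comm]

lemma snd_phi0 (g : ℚ → ℚ) (t : ℚ → ℚ → ZMod 4) (p : Trip) :
    (phi0 g t p).2.2 = t p.1 p.2.1 + p.2.2 := by unfold phi0; split <;> rfl

lemma sel_phi0 (g : ℚ → ℚ) (t : ℚ → ℚ → ZMod 4)
    (hpar : ∀ a b : ℚ, a < b → ((t a b = 0 ∨ t a b = 2) ↔ g a < g b))
    (p : Trip) (hp : p.1 < p.2.1) :
    selCoord (phi0 g t p) = g (selCoord p) := by
  obtain ⟨a, b, m⟩ := p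
  have hab : a < b := hp
  have hpab := hpar a b hab
  unfold phi0 selCoord
  by_cases hg : g a < g b
  · rw [if_pos hg]
    have ht : t a b = 0 ∨ t a b = 2 := hpab.mpr hg
    by_cases hm : m = 0 ∨ m = 2
    · rw [if_pos ((zmod_par1 _ _ ht).mp hm), if_pos hm]
    · rw [if_neg ((not_congr (zmod_par1 _ _ ht)).mp hm), if_neg hm]
  · rw [if_neg hg]
    have ht : ¬(t a b = 0 ∨ t a b = 2) := fun h => hg (hpab.mp h)
    by_cases hm : m = 0 ∨ m = 2
    · rw [if_neg ((zmod_par2 _ _ ht).mp hm), if_pos hm]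
    · rw [if_pos (by by_contra h'; exact hm ((zmod_par2 _ _ ht).mpr h')), if_neg hm]

lemma isHomY_Phi (g : ℚ → ℚ) (hg : Function.Injective g) (t : ℚ → ℚ → ZMod 4)
    (hpar : ∀ a b : ℚ, a < b → ((t a b = 0 ∨ t a b = 2) ↔ g a < g b)) :
    IsHomY (Phi g hg t) := by
  refine ⟨?_, ?_, ?_⟩
  · rintro ⟨⟨a, b, m⟩, hu⟩ ⟨⟨a', b', m'⟩, hv⟩ ⟨h1, h2, h3⟩
    simp only at h1 h2 h3
    subst h1; subst h2; subst h3
    by_cases hgab : g a < g b <;>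
      simp [Phi, Rrel, phi0, hgab, add_assoc]
  · intro u v h
    obtain ⟨hs, hc⟩ := h
    refine ⟨?_, ?_⟩
    · show selCoord (phi0 g t u.1) = selCoord (phi0 g t v.1)
      rw [sel_phi0 g t hpar u.1 u.2, sel_phi0 g t hpar v.1 v.2, hs]
    · show (pairOf (phi0 g t u.1) ∩ pairOf (phi0 g t v.1)).card = 1
      rw [pairOf_phi0, pairOf_phi0, ← Finset.image_inter _ _ hg,
        Finset.card_image_of_injective _ hg, hc]
  · intro u v h
    show pairOf (phi0 g t u.1) ∩ pairOf (phi0 g t v.1) = ∅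
    rw [pairOf_phi0, pairOf_phi0, ← Finset.image_inter _ _ hg,
      show pairOf u.1 ∩ pairOf v.1 = ∅ from h, Finset.image_empty]

noncomputable def tinv (g : ℚ ≃ ℚ) (t : ℚ → ℚ → ZMod 4) (c d : ℚ) : ZMod 4 :=
  - t (min (g.symm c) (g.symm d)) (max (g.symm c) (g.symm d))

lemma Phi_left_inv (g : ℚ ≃ ℚ) (t : ℚ → ℚ → ZMod 4) (u : Ydom) :
    Phi g.symm g.symm.injective (tinv g t) (Phi g g.injective t u) = u := by
  obtain ⟨⟨a, b, m⟩, hab'⟩ := u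
  have hab : a < b := hab'
  apply Subtype.ext
  show phi0 g.symm (tinv g t) (phi0 g t ((a, b, m) : Trip)) = ((a, b, m) : Trip)
  by_cases hg : g a < g b
  · have hin : phi0 g t ((a, b, m) : Trip) = (g a, g b, t a b + m) := by
      unfold phi0; rw [if_pos hg]
    rw [hin]
    unfold phi0
    rw [if_pos (show g.symm (g a) < g.symm (g b) by simpa using hab)]
    simp [tinv, min_eq_left hab.le, max_eq_right hab.le]
  · have hin : phi0 g t ((a, b, m) : Trip) = (g b, g a, t a b + m) := by
      unfold phi0; rw [if_neg hg]
    rw [hin]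
    unfold phi0
    rw [if_neg (show ¬ g.symm (g b) < g.symm (g a) by simpa using hab.le)]
    simp [tinv, min_eq_right hab.le, max_eq_left hab.le]

lemma Phi_right_inv (g : ℚ ≃ ℚ) (t : ℚ → ℚ → ZMod 4) (v : Ydom) :
    Phi g g.injective t (Phi g.symm g.symm.injective (tinv g t) v) = v := by
  obtain ⟨⟨c, d, n⟩, hcd'⟩ := v
  have hcd : c < d := hcd'
  apply Subtype.ext
  show phi0 g t (phi0 g.symm (tinv g t) ((c, d, n) : Trip)) = ((c, d, n) : Trip)
  rcases lt_or_gt_of_ne (g.symm.injective.ne hcd.ne) with h | h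
  · have hin : phi0 g.symm (tinv g t) ((c, d, n) : Trip)
        = (g.symm c, g.symm d, tinv g t c d + n) := by
      unfold phi0; rw [if_pos h]
    rw [hin]
    unfold phi0
    rw [if_pos (show g (g.symm c) < g (g.symm d) by simpa using hcd)]
    simp [tinv, min_eq_left h.le, max_eq_right h.le]
  · have hin : phi0 g.symm (tinv g t) ((c, d, n) : Trip)
        = (g.symm d, g.symm c, tinv g t c d + n) := by
      unfold phi0; rw [if_neg (not_lt.mpr h.le)]
    rw [hin]
    unfold phi0
    rw [if_neg (show ¬ g (g.symm d) < g (g.symm c) by simpa using hcd.le)]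
    simp [tinv, min_eq_right h.le, max_eq_left h.le]

noncomputable def gammaE (g : ℚ ≃ ℚ) (t : ℚ → ℚ → ZMod 4) : Equiv.Perm Ydom :=
  ⟨Phi g g.injective t, Phi g.symm g.symm.injective (tinv g t),
    Phi_left_inv g t, Phi_right_inv g t⟩

lemma tinv_par (g : ℚ ≃ ℚ) (t : ℚ → ℚ → ZMod 4)
    (hpar : ∀ a b : ℚ, a < b → ((t a b = 0 ∨ t a b = 2) ↔ g a < g b)) :
    ∀ c d : ℚ, c < d → ((tinv g t c d = 0 ∨ tinv g t c d = 2) ↔ g.symm c < g.symm d) := by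
  intro c d hcd
  unfold tinv
  rcases lt_or_gt_of_ne (g.symm.injective.ne hcd.ne) with h | h
  · rw [min_eq_left h.le, max_eq_right h.le, zmod_neg, hpar _ _ h]
    simp only [Equiv.apply_symm_apply]
    exact iff_of_true hcd h
  · rw [min_eq_right h.le, max_eq_left h.le, zmod_neg, hpar _ _ h]
    simp only [Equiv.apply_symm_apply]
    exact iff_of_false hcd.asymm h.asymm

noncomputable def fe (e : Ydom → Ydom) (q : ℚ) : ℚ :=
  selCoord (e ⟨(q, q + 1, 0), lt_add_one q⟩).1

lemma sel_e (e : Ydom → Ydom) (he : IsHomY e) (u : Ydom) :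
    selCoord (e u).1 = fe e (selCoord u.1) := by
  classical
  set q := selCoord u.1 with hq
  have hqmem : q ∈ pairOf u.1 := sel_mem u.1
  have hq1 : ((q, q + 1, (0 : ZMod 4)) : Trip).1 < ((q, q + 1, (0 : ZMod 4)) : Trip).2.1 :=
    lt_add_one q
  set u0 : Ydom := ⟨(q, q + 1, 0), hq1⟩ with hu0
  have hfe : fe e q = selCoord (e u0).1 := rfl
  have hsel0 : selCoord u0.1 = q := selCoord_fst (Or.inl rfl)
  by_cases hmem : q + 1 ∈ pairOf u.1
  · have hq2 : ((q, q + 2, (0 : ZMod 4)) : Trip).1 < ((q, q + 2, (0 : ZMod 4)) : Trip).2.1 := by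
      show q < q + 2; linarith
    set w : Ydom := ⟨(q, q + 2, 0), hq2⟩ with hw
    have hselw : selCoord w.1 = q := selCoord_fst (Or.inl rfl)
    have hpu : pairOf u.1 = {q, q + 1} := by
      refine (Finset.eq_of_subset_of_card_le ?_ ?_).symm
      · exact Finset.insert_subset hqmem (Finset.singleton_subset_iff.mpr hmem)
      · calc (pairOf u.1).card ≤ 2 := pairOf_card_le _
          _ = ({q, q + 1} : Finset ℚ).card := (Finset.card_pair (by linarith)).symm
    have hE1 : Erel u.1 w.1 := by
      refine ⟨by rw [← hq, hselw], ?_⟩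
      have hint : pairOf u.1 ∩ pairOf w.1 = {q} := by
        rw [hpu]
        show ({q, q + 1} : Finset ℚ) ∩ {q, q + 2} = {q}
        ext x
        simp only [Finset.mem_inter, Finset.mem_insert, Finset.mem_singleton]
        constructor
        · rintro ⟨rfl | rfl, h | h⟩ <;> first | rfl | linarith
        · rintro rfl; exact ⟨Or.inl rfl, Or.inl rfl⟩
      rw [hint]; exact Finset.card_singleton _
    have hE2 : Erel w.1 u0.1 := by
      refine ⟨by rw [hselw, hsel0], ?_⟩
      have hint : pairOf w.1 ∩ pairOf u0.1 = {q} := by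
        show ({q, q + 2} : Finset ℚ) ∩ {q, q + 1} = {q}
        ext x
        simp only [Finset.mem_inter, Finset.mem_insert, Finset.mem_singleton]
        constructor
        · rintro ⟨rfl | rfl, h | h⟩ <;> first | rfl | linarith
        · rintro rfl; exact ⟨Or.inl rfl, Or.inl rfl⟩
      rw [hint]; exact Finset.card_singleton _
    rw [(he.2.1 u w hE1).1, (he.2.1 w u0 hE2).1, hfe]
  · have hE : Erel u.1 u0.1 := by
      refine ⟨by rw [← hq, hsel0], ?_⟩
      have hint : pairOf u.1 ∩ pairOf u0.1 = {q} := by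
        ext x
        simp only [Finset.mem_inter, Finset.mem_singleton]
        constructor
        · rintro ⟨hx1, hx2⟩
          have : x = q ∨ x = q + 1 := by simpa [pairOf] using hx2
          rcases this with rfl | rfl
          · rfl
          · exact absurd hx1 hmem
        · rintro rfl; exact ⟨hqmem, by simp [pairOf]; exact Or.inl rfl⟩
      rw [hint]; exact Finset.card_singleton _
    rw [(he.2.1 u u0 hE).1, hfe]

lemma fe_inj (e : Ydom → Ydom) (he : IsHomY e) : Function.Injective (fe e) := by
  intro p q hfe
  by_contra hne
  set M := max p q with hM
  have hu' : ((p, M + 1, (0 : ZMod 4)) : Trip).1 < ((p, M + 1, (0 : ZMod 4)) : Trip).2.1 := by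
    show p < M + 1
    have := le_max_left p q; linarith
  have hv' : ((q, M + 2, (0 : ZMod 4)) : Trip).1 < ((q, M + 2, (0 : ZMod 4)) : Trip).2.1 := by
    show q < M + 2
    have := le_max_right p q; linarith
  set u : Ydom := ⟨(p, M + 1, 0), hu'⟩ with hu
  set v : Ydom := ⟨(q, M + 2, 0), hv'⟩ with hv
  have hN : Nrel u.1 v.1 := by
    unfold Nrel
    rw [Finset.eq_empty_iff_forall_notMem]
    intro x hx
    simp only [pairOf, Finset.mem_inter, Finset.mem_insert, Finset.mem_singleton] at hx
    have h1 := le_max_left p q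
    have h2 := le_max_right p q
    rcases hx with ⟨rfl | rfl, h4 | h4⟩
    · exact hne h4
    · linarith
    · linarith
    · linarith
  have himg := he.2.2 u v hN
  have hp : fe e q ∈ pairOf (e u).1 := by
    have h := sel_e e he u
    have hselu : selCoord u.1 = p := selCoord_fst (Or.inl rfl)
    rw [hselu, hfe] at h
    rw [← h]; exact sel_mem _
  have hq : fe e q ∈ pairOf (e v).1 := by
    have h := sel_e e he v
    have hselv : selCoord v.1 = q := selCoord_fst (Or.inl rfl)
    rw [hselv] at h
    rw [← h]; exact sel_mem _
  exact Finset.notMem_empty _ (himg ▸ Finset.mem_inter.mpr ⟨hp, hq⟩)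

lemma e_step (e : Ydom → Ydom) (he : IsHomY e) (a b : ℚ) (hab : ((a, b, (0:ZMod 4)) : Trip).1 < ((a, b, (0:ZMod 4)) : Trip).2.1) (m : ZMod 4) :
    e ⟨(a, b, m + 1), hab⟩ =
      ⟨((e ⟨(a, b, m), hab⟩).1.1, (e ⟨(a, b, m), hab⟩).1.2.1,
        (e ⟨(a, b, m), hab⟩).1.2.2 + 1), (e ⟨(a, b, m), hab⟩).2⟩ := by
  obtain ⟨h1, h2, h3⟩ := he.1 ⟨(a, b, m), hab⟩ ⟨(a, b, m + 1), hab⟩ ⟨rfl, rfl, rfl⟩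
  exact Subtype.ext (Prod.ext_iff.mpr ⟨h1.symm, Prod.ext_iff.mpr ⟨h2.symm, h3⟩⟩)

lemma e_cycle (e : Ydom → Ydom) (he : IsHomY e) (a b : ℚ)
    (hab : ((a, b, (0:ZMod 4)) : Trip).1 < ((a, b, (0:ZMod 4)) : Trip).2.1) (m : ZMod 4) :
    e ⟨(a, b, m), hab⟩ =
      ⟨((e ⟨(a, b, 0), hab⟩).1.1, (e ⟨(a, b, 0), hab⟩).1.2.1,
        (e ⟨(a, b, 0), hab⟩).1.2.2 + m), (e ⟨(a, b, 0), hab⟩).2⟩ := by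
  have k0 := e_step e he a b hab 0
  rw [show ((0 : ZMod 4) + 1) = 1 by decide] at k0
  have k1 := e_step e he a b hab 1
  rw [show ((1 : ZMod 4) + 1) = 2 by decide] at k1
  have k2 := e_step e he a b hab 2
  rw [show ((2 : ZMod 4) + 1) = 3 by decide] at k2
  rcases zmod_cases m with rfl | rfl | rfl | rfl
  · exact Subtype.ext (Prod.ext_iff.mpr ⟨rfl, Prod.ext_iff.mpr ⟨rfl, (add_zero _).symm⟩⟩)
  · exact k0
  · rw [k1, k0]
    exact Subtype.ext (Prod.ext_iff.mpr ⟨rfl, Prod.ext_iff.mpr ⟨rfl, by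
      show (e ⟨(a, b, 0), hab⟩).1.2.2 + 1 + 1 = (e ⟨(a, b, 0), hab⟩).1.2.2 + 2
      rw [add_assoc]; norm_num⟩⟩)
  · rw [k2, k1, k0]
    exact Subtype.ext (Prod.ext_iff.mpr ⟨rfl, Prod.ext_iff.mpr ⟨rfl, by
      show (e ⟨(a, b, 0), hab⟩).1.2.2 + 1 + 1 + 1 = (e ⟨(a, b, 0), hab⟩).1.2.2 + 3
      rw [add_assoc, add_assoc]; norm_num⟩⟩)

lemma pair_e (e : Ydom → Ydom) (he : IsHomY e) (a b : ℚ)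
    (hab : ((a, b, (0:ZMod 4)) : Trip).1 < ((a, b, (0:ZMod 4)) : Trip).2.1) (m : ZMod 4) :
    pairOf (e ⟨(a, b, m), hab⟩).1 = {fe e a, fe e b} := by
  have hab' : a < b := hab
  have hcyc := e_cycle e he a b hab m
  have hc0 : pairOf (e ⟨(a, b, m), hab⟩).1 = pairOf (e ⟨(a, b, 0), hab⟩).1 := by
    rw [hcyc]; rfl
  have hfa : fe e a ∈ pairOf (e ⟨(a, b, 0), hab⟩).1 := by
    have h := sel_e e he ⟨(a, b, 0), hab⟩
    rw [selCoord_fst (Or.inl rfl)] at h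
    rw [← h]; exact sel_mem _
  have hfb : fe e b ∈ pairOf (e ⟨(a, b, 0), hab⟩).1 := by
    have h := sel_e e he ⟨(a, b, 1), hab⟩
    have hsel1 : selCoord ((⟨(a, b, 1), hab⟩ : Ydom) : Trip) = b := by
      show selCoord ((a, b, (1 : ZMod 4)) : Trip) = b
      exact selCoord_snd (by decide)
    rw [hsel1] at h
    have hp1 : pairOf (e ⟨(a, b, (1:ZMod 4)), hab⟩).1 = pairOf (e ⟨(a, b, 0), hab⟩).1 := by
      rw [e_cycle e he a b hab 1]; rfl
    rw [← h, ← hp1]; exact sel_mem _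
  rw [hc0]
  refine (Finset.eq_of_subset_of_card_le ?_ ?_).symm
  · exact Finset.insert_subset hfa (Finset.singleton_subset_iff.mpr hfb)
  · calc (pairOf (e ⟨(a, b, 0), hab⟩).1).card ≤ 2 := pairOf_card_le _
      _ = ({fe e a, fe e b} : Finset ℚ).card :=
        (Finset.card_pair ((fe_inj e he).ne hab'.ne)).symm

lemma shift_parity (e : Ydom → Ydom) (he : IsHomY e) (a b : ℚ)
    (hab : ((a, b, (0:ZMod 4)) : Trip).1 < ((a, b, (0:ZMod 4)) : Trip).2.1) :
    ((e ⟨(a, b, 0), hab⟩).1.2.2 = 0 ∨ (e ⟨(a, b, 0), hab⟩).1.2.2 = 2) ↔ fe e a < fe e b := by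
  have hab' : a < b := hab
  set u0 : Ydom := ⟨(a, b, 0), hab⟩ with hu0
  have hpair : pairOf (e u0).1 = {fe e a, fe e b} := pair_e e he a b hab 0
  have hsel : selCoord (e u0).1 = fe e a := by
    have h := sel_e e he u0
    rwa [selCoord_fst (Or.inl rfl)] at h
  have hcd : (e u0).1.1 < (e u0).1.2.1 := (e u0).2
  have hne : fe e a ≠ fe e b := (fe_inj e he).ne hab'.ne
  have hd_mem : (e u0).1.2.1 ∈ ({fe e a, fe e b} : Finset ℚ) := by
    rw [← hpair]; simp [pairOf]
  have hc_mem : (e u0).1.1 ∈ ({fe e a, fe e b} : Finset ℚ) := by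
    rw [← hpair]; simp [pairOf]
  simp only [Finset.mem_insert, Finset.mem_singleton] at hd_mem hc_mem
  constructor
  · intro hs
    have h1 : (e u0).1.1 = fe e a := by
      rw [← hsel]; exact (if_pos hs).symm
    rcases hd_mem with h2 | h2
    · exact absurd (h1 ▸ h2 ▸ hcd) (lt_irrefl _)
    · rw [← h1, ← h2]; exact hcd
  · intro hlt
    by_contra hs
    have h1 : (e u0).1.2.1 = fe e a := by
      rw [← hsel]; exact (if_neg hs).symm
    rcases hc_mem with h2 | h2
    · exact absurd (h2 ▸ h1 ▸ hcd) (lt_irrefl _)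
    · rw [h1, h2] at hcd; exact absurd (hcd.trans hlt) (lt_irrefl _)

lemma exists_perm_extend (f : ℚ → ℚ) (hf : Function.Injective f) (S : Finset ℚ) :
    ∃ g : Equiv.Perm ℚ, ∀ q ∈ S, g q = f q := by
  classical
  induction S using Finset.induction_on with
  | empty => exact ⟨1, by simp⟩
  | @insert a S ha ih =>
    obtain ⟨g, hg⟩ := ih
    refine ⟨g * Equiv.swap a (g.symm (f a)), ?_⟩
    intro q hq
    rcases Finset.mem_insert.mp hq with rfl | hq2
    · simp [Equiv.Perm.mul_apply, Equiv.swap_apply_left]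
    · have h1 : q ≠ a := fun h => ha (h ▸ hq2)
      have h2 : q ≠ g.symm (f a) := by
        intro hq3
        apply h1
        apply hf
        have hgq : g q = f a := by rw [hq3]; simp
        rw [← hg q hq2, hgq]
      rw [Equiv.Perm.mul_apply, Equiv.swap_apply_of_ne_of_ne h1 h2]
      exact hg q hq2

noncomputable def tF (e : Ydom → Ydom) (F : Finset Ydom) (g : ℚ → ℚ) (a b : ℚ) : ZMod 4 :=
  if h : ∃ x : Ydom, x ∈ F ∧ x.1.1 = a ∧ x.1.2.1 = b then
    (e h.choose).1.2.2 - h.choose.1.2.2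
  else if g a < g b then 0 else 1

lemma tF_pos (e : Ydom → Ydom) (he : IsHomY e) (F : Finset Ydom) (g : ℚ → ℚ) (a b : ℚ)
    (hab : ((a, b, (0 : ZMod 4)) : Trip).1 < ((a, b, (0 : ZMod 4)) : Trip).2.1)
    (h : ∃ x : Ydom, x ∈ F ∧ x.1.1 = a ∧ x.1.2.1 = b) :
    tF e F g a b = (e ⟨(a, b, 0), hab⟩).1.2.2 := by
  unfold tF
  rw [dif_pos h]
  obtain ⟨hF, h1, h2⟩ := h.choose_spec
  set x := h.choose with hxdef
  set m0 := x.1.2.2 with hm0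
  have hx : x = ⟨(a, b, m0), hab⟩ :=
    Subtype.ext (Prod.ext_iff.mpr ⟨h1, Prod.ext_iff.mpr ⟨h2, rfl⟩⟩)
  rw [hx, e_cycle e he a b hab m0]
  show (e ⟨(a, b, 0), hab⟩).1.2.2 + m0 - m0 = (e ⟨(a, b, 0), hab⟩).1.2.2
  exact add_sub_cancel_right _ _


/-- The structure `𝔜 = (Y; R, E, N)` is a model-complete core: every endomorphism agrees
with an automorphism on every finite subset of the domain. -/
theorem Y_model_complete_core (e : Ydom → Ydom) (he : IsHomY e) (F : Finset Ydom) :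
    ∃ γ : Equiv.Perm Ydom, IsHomY ⇑γ ∧ IsHomY ⇑γ.symm ∧ ∀ x ∈ F, e x = γ x := by
  classical
  obtain ⟨g, hgS⟩ := exists_perm_extend (fe e) (fe_inj e he)
      (F.biUnion (fun x => {x.1.1, x.1.2.1}))
  have hmem1 : ∀ x : Ydom, x ∈ F → g x.1.1 = fe e x.1.1 := fun x hx =>
    hgS _ (Finset.mem_biUnion.mpr ⟨x, hx, by simp⟩)
  have hmem2 : ∀ x : Ydom, x ∈ F → g x.1.2.1 = fe e x.1.2.1 := fun x hx =>
    hgS _ (Finset.mem_biUnion.mpr ⟨x, hx, by simp⟩)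
  set t := tF e F g with htdef
  have hpar : ∀ a b : ℚ, a < b → ((t a b = 0 ∨ t a b = 2) ↔ g a < g b) := by
    intro a b hab
    by_cases h : ∃ x : Ydom, x ∈ F ∧ x.1.1 = a ∧ x.1.2.1 = b
    · have hab' : ((a, b, (0 : ZMod 4)) : Trip).1 < ((a, b, (0 : ZMod 4)) : Trip).2.1 := hab
      rw [htdef, tF_pos e he F g a b hab' h]
      obtain ⟨x, hxF, h1, h2⟩ := h
      have hga : g a = fe e a := h1 ▸ hmem1 x hxF
      have hgb : g b = fe e b := h2 ▸ hmem2 x hxF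
      rw [hga, hgb]
      exact shift_parity e he a b hab'
    · rw [htdef]
      unfold tF
      rw [dif_neg h]
      by_cases hg : g a < g b
      · rw [if_pos hg]; exact iff_of_true (Or.inl rfl) hg
      · rw [if_neg hg]
        exact iff_of_false (by decide) hg
  refine ⟨gammaE g t, isHomY_Phi g g.injective t hpar,
    isHomY_Phi g.symm g.symm.injective (tinv g t) (tinv_par g t hpar), ?_⟩
  intro x hxF
  obtain ⟨⟨a, b, m⟩, hab⟩ := x
  have hablt : a < b := hab
  have hex : ∃ y : Ydom, y ∈ F ∧ y.1.1 = a ∧ y.1.2.1 = b := ⟨⟨(a, b, m), hab⟩, hxF, rfl, rfl⟩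
  have hts : t a b = (e ⟨(a, b, 0), hab⟩).1.2.2 := by
    rw [htdef]; exact tF_pos e he F g a b hab hex
  have hga : g a = fe e a := hmem1 ⟨(a, b, m), hab⟩ hxF
  have hgb : g b = fe e b := hmem2 ⟨(a, b, m), hab⟩ hxF
  have hcyc := e_cycle e he a b hab m
  have hpairs : pairOf (e ⟨(a, b, 0), hab⟩).1 = {fe e a, fe e b} := pair_e e he a b hab 0
  have hphi : ∀ (p q : ℚ) (n : ZMod 4), phi0 g t ((p, q, n) : Trip) =
      if g p < g q then ((g p, g q, t p q + n) : Trip) else (g q, g p, t p q + n) :=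
    fun _ _ _ => rfl
  show e ⟨(a, b, m), hab⟩ = gammaE g t ⟨(a, b, m), hab⟩
  rw [hcyc]
  apply Subtype.ext
  show ((e ⟨(a, b, 0), hab⟩).1.1, (e ⟨(a, b, 0), hab⟩).1.2.1, (e ⟨(a, b, 0), hab⟩).1.2.2 + m)
      = phi0 g t ((a, b, m) : Trip)
  rw [hphi]
  by_cases hg : g a < g b
  · rw [if_pos hg]
    have hlt : fe e a < fe e b := by rw [← hga, ← hgb]; exact hg
    obtain ⟨h1, h2⟩ := pair_sorted
      (show ({(e ⟨(a, b, 0), hab⟩).1.1, (e ⟨(a, b, 0), hab⟩).1.2.1} : Finset ℚ)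
          = {fe e a, fe e b} from hpairs)
      (e ⟨(a, b, 0), hab⟩).2 hlt
    exact Prod.ext_iff.mpr ⟨by rw [h1, hga], Prod.ext_iff.mpr ⟨by rw [h2, hgb], by rw [hts]⟩⟩
  · rw [if_neg hg]
    have hlt : fe e b < fe e a := by
      rw [← hga, ← hgb]
      exact lt_of_le_of_ne (not_lt.mp hg) (g.injective.ne hablt.ne')
    obtain ⟨h1, h2⟩ := pair_sorted
      (show ({(e ⟨(a, b, 0), hab⟩).1.1, (e ⟨(a, b, 0), hab⟩).1.2.1} : Finset ℚ)
          = {fe e b, fe e a} from hpairs.trans (Finset.pair_comm _ _))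
      (e ⟨(a, b, 0), hab⟩).2 hlt
    exact Prod.ext_iff.mpr ⟨by rw [h1, hgb], Prod.ext_iff.mpr ⟨by rw [h2, hga], by rw [hts]⟩⟩
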